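/- Order of the Wronskian: let k ≥ 1 and let h₁, …, h_k be nonzero formal power series over ℂ whose orders of vanishing ν₁ < ν₂ < … < ν_k are strictly increasing (and finite). Then the Wronskian W(h₁,…,h_k), defined as the determinant of the k×k matrix whose (i,j) entry is the (i−1)-st formal derivative of h_j, is a nonzero power series of order ν₁ + ν₂ + … + ν_k − k(k−1)/2. -/

import Mathlib

open PowerSeries

/-- The Wronskian of `k` formal power series: the determinant of the `k × k` 
matrix whose `(i,j)` entry is the `i`-th formal derivative of `h j`. -/
noncomputable def psWronskian {k : ℕ} (h : Fin k → PowerSeries ℂ) : PowerSeries ℂ :=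
  Matrix.det (Matrix.of fun i j : Fin k => (⇑(PowerSeries.derivative ℂ))^[(i : ℕ)] (h j))

private lemma coeff_iterate_derivative (f : PowerSeries ℂ) (i n : ℕ) :
    (coeff n) ((⇑(PowerSeries.derivative ℂ))^[i] f) =
      ((n + i).descFactorial i : ℂ) * (coeff (n + i)) f := by
  induction i generalizing n with
  | zero => simp
  | succ i ih =>
    rw [Function.iterate_succ_apply', PowerSeries.coeff_derivative, ih (n + 1)]
    have hd : (n + 1 + i).descFactorial (i + 1) = (n + 1) * ((n + 1 + i).descFactorial i) := by
      rw [Nat.descFactorial_succ]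
      congr 1
      omega
    rw [show n + (i + 1) = n + 1 + i from by omega, hd]
    push_cast
    ring

private lemma coeff_mul_aux (f g : PowerSeries ℂ) (n m : ℕ)
    (hf : ∀ a < n, coeff a f = 0) (hg : ∀ b < m, coeff b g = 0) :
    (∀ c < n + m, coeff c (f * g) = 0) ∧
      coeff (n + m) (f * g) = coeff n f * coeff m g := by
  constructor
  · intro c hc
    rw [PowerSeries.coeff_mul]
    apply Finset.sum_eq_zero
    rintro ⟨a, b⟩ hab
    rw [Finset.HasAntidiagonal.mem_antidiagonal] at hab
    rcases lt_or_ge a n with hlt | hge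
    · simp [hf a hlt]
    · have : b < m := by omega
      simp [hg b this]
  · rw [PowerSeries.coeff_mul, Finset.sum_eq_single (n, m)]
    · rintro ⟨a, b⟩ hab hne
      rw [Finset.HasAntidiagonal.mem_antidiagonal] at hab
      rcases lt_or_ge a n with hlt | hge
      · simp [hf a hlt]
      · rcases lt_or_ge b m with hlt' | hge'
        · simp [hg b hlt']
        · exfalso
          apply hne
          have ha : a = n := by omega
          have hb : b = m := by omega
          simp [ha, hb]
    · intro hmem
      simp at hmem

private lemma coeff_prod_aux {ι : Type*} (s : Finset ι) (f : ι → PowerSeries ℂ) (n : ι → ℕ)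
    (hf : ∀ i ∈ s, ∀ a < n i, coeff a (f i) = 0) :
    (∀ m < ∑ i ∈ s, n i, coeff m (∏ i ∈ s, f i) = 0) ∧
      coeff (∑ i ∈ s, n i) (∏ i ∈ s, f i) = ∏ i ∈ s, coeff (n i) (f i) := by
  classical
  induction s using Finset.cons_induction with
  | empty => exact ⟨by simp, by simp⟩
  | cons a s ha ih =>
    rw [Finset.prod_cons, Finset.sum_cons]
    obtain ⟨ih1, ih2⟩ := ih (fun i hi => hf i (Finset.mem_cons_of_mem hi))
    have hmul := coeff_mul_aux (f a) (∏ i ∈ s, f i) (n a) (∑ i ∈ s, n i)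
      (hf a (Finset.mem_cons_self a s)) ih1
    exact ⟨hmul.1, by rw [hmul.2, ih2, Finset.prod_cons]⟩

private lemma coeff_zsmul_cast (z : ℤ) (f : PowerSeries ℂ) (m : ℕ) :
    coeff m ((z : PowerSeries ℂ) * f) = (z : ℂ) * coeff m f := by
  rw [← zsmul_eq_mul, map_zsmul, zsmul_eq_mul]

/-- If `h₁, …, h_k` are nonzero power series with strictly increasing orders of 
vanishing `ν₁ < … < ν_k`, then their Wronskian is nonzero of order 
`ν₁ + … + ν_k − k(k−1)/2`. -/
theorem order_of_wronskian (k : ℕ) (hk : 1 ≤ k) (h : Fin k → PowerSeries ℂ)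
    (hne : ∀ i, h i ≠ 0)
    (hmono : StrictMono fun i => (h i).order) :
    psWronskian h ≠ 0 ∧
    (psWronskian h).order + (k * (k - 1) / 2 : ℕ) = ∑ i, (h i).order := by
  classical
  have hfin : ∀ j, (h j).order ≠ ⊤ := fun j =>
    (PowerSeries.order_finite_iff_ne_zero.mpr (hne j)).ne
  set ν : Fin k → ℕ := fun j => ((h j).order).toNat with hνdef
  have hν : ∀ j, (h j).order = (ν j : ℕ∞) := fun j => (ENat.coe_toNat (hfin j)).symm
  have horder : ∀ j, coeff (ν j) (h j) ≠ 0 ∧ ∀ a < ν j, coeff a (h j) = 0 := by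
    intro j
    have := PowerSeries.order_eq_nat.mp (hν j)
    exact ⟨this.1, fun a ha => this.2 a ha⟩
  have hνmono : StrictMono ν := by
    intro i j hij
    have h2 : ((ν i : ℕ∞)) < (ν j : ℕ∞) := by
      rw [← hν i, ← hν j]
      exact hmono hij
    exact_mod_cast h2
  have hle' : ∀ (m : ℕ) (hm : m < k), m ≤ ν ⟨m, hm⟩ := by
    intro m
    induction m with
    | zero => intro _; exact Nat.zero_le _
    | succ m ih =>
      intro hm
      have hm' : m < k := Nat.lt_of_succ_lt hm
      have h1 : ν ⟨m, hm'⟩ < ν ⟨m + 1, hm⟩ := hνmono (by simp [Fin.mk_lt_mk])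
      have := ih hm'
      omega
  have hle : ∀ j : Fin k, (j : ℕ) ≤ ν j := by
    intro j
    have h2 := hle' j.val j.isLt
    simpa using h2
  set S : ℕ := ∑ j : Fin k, (j : ℕ) with hSdef
  have hS : S = k * (k - 1) / 2 := by
    rw [hSdef, Fin.sum_univ_eq_sum_range (fun i => i), Finset.sum_range_id]
  have hSle : S ≤ ∑ j, ν j := Finset.sum_le_sum (fun j _ => hle j)
  set N : ℕ := (∑ j, ν j) - S with hNdef
  have hN : N + S = ∑ j, ν j := Nat.sub_add_cancel hSle
  -- products over permutations
  set c : Fin k → ℂ := fun j => coeff (ν j) (h j) with hcdef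
  have hvan : ∀ (σ : Equiv.Perm (Fin k)) (i : Fin k),
      ∀ a < ν i - (σ i : ℕ), coeff a ((⇑(PowerSeries.derivative ℂ))^[(σ i : ℕ)] (h i)) = 0 := by
    intro σ i a ha
    rw [coeff_iterate_derivative]
    have : a + (σ i : ℕ) < ν i := by omega
    rw [(horder i).2 _ this, mul_zero]
  have hsumS : ∀ σ : Equiv.Perm (Fin k), ∑ i, ((σ i : ℕ)) = S := by
    intro σ
    rw [hSdef]
    exact Equiv.sum_comp σ (fun i => (i : ℕ))
  have hsum : ∀ σ : Equiv.Perm (Fin k), N ≤ ∑ i, (ν i - (σ i : ℕ)) := by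
    intro σ
    have h1 : ∑ i, ν i ≤ ∑ i, ((ν i - (σ i : ℕ)) + (σ i : ℕ)) :=
      Finset.sum_le_sum (fun i _ => le_tsub_add)
    rw [Finset.sum_add_distrib, hsumS σ] at h1
    omega
  have hdet : ∀ m, coeff m (psWronskian h) =
      ∑ σ : Equiv.Perm (Fin k), ((Equiv.Perm.sign σ : ℤ) : ℂ) *
        coeff m (∏ i, (⇑(PowerSeries.derivative ℂ))^[(σ i : ℕ)] (h i)) := by
    intro m
    rw [psWronskian, Matrix.det_apply', map_sum]
    refine Finset.sum_congr rfl fun σ _ => ?_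
    rw [coeff_zsmul_cast]
    rfl
  -- vanishing below N
  have hlow : ∀ m < N, coeff m (psWronskian h) = 0 := by
    intro m hm
    rw [hdet]
    apply Finset.sum_eq_zero
    intro σ _
    have := (coeff_prod_aux Finset.univ _ (fun i => ν i - (σ i : ℕ)) (fun i _ => hvan σ i)).1
      m (lt_of_lt_of_le hm (hsum σ))
    rw [this, mul_zero]
  -- the coefficient at N
  have key : ∀ σ : Equiv.Perm (Fin k),
      coeff N (∏ i, (⇑(PowerSeries.derivative ℂ))^[(σ i : ℕ)] (h i)) =
        ∏ i, (((ν i).descFactorial (σ i) : ℂ) * c i) := by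
    intro σ
    by_cases hcase : ∀ i, (σ i : ℕ) ≤ ν i
    · have hsum_eq : ∑ i, (ν i - (σ i : ℕ)) = N := by
        have h1 : ∑ i, ((ν i - (σ i : ℕ)) + (σ i : ℕ)) = ∑ i, ν i :=
          Finset.sum_congr rfl fun i _ => Nat.sub_add_cancel (hcase i)
        rw [Finset.sum_add_distrib, hsumS σ] at h1
        omega
      have h2 := (coeff_prod_aux Finset.univ _ (fun i => ν i - (σ i : ℕ))
        (fun i _ => hvan σ i)).2
      rw [hsum_eq] at h2
      rw [h2]
      refine Finset.prod_congr rfl fun i _ => ?_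
      rw [coeff_iterate_derivative, Nat.sub_add_cancel (hcase i)]
    · push_neg at hcase
      obtain ⟨i₀, hi₀⟩ := hcase
      have hstrict : N < ∑ i, (ν i - (σ i : ℕ)) := by
        have h1 : ∑ i, ν i < ∑ i, ((ν i - (σ i : ℕ)) + (σ i : ℕ)) := by
          apply Finset.sum_lt_sum (fun i _ => le_tsub_add) ⟨i₀, Finset.mem_univ i₀, ?_⟩
          omega
        rw [Finset.sum_add_distrib, hsumS σ] at h1
        omega
      have hz := (coeff_prod_aux Finset.univ _ (fun i => ν i - (σ i : ℕ))
        (fun i _ => hvan σ i)).1 N hstrict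
      rw [hz]
      symm
      apply Finset.prod_eq_zero (Finset.mem_univ i₀)
      rw [Nat.descFactorial_eq_zero_iff_lt.mpr hi₀]
      simp
  -- the coefficient at N is a determinant
  set M : Matrix (Fin k) (Fin k) ℂ :=
    Matrix.of (fun i j : Fin k => c j * ((ν j).descFactorial i : ℂ)) with hMdef
  have hcoeffN : coeff N (psWronskian h) = M.det := by
    rw [hdet, Matrix.det_apply']
    refine Finset.sum_congr rfl fun σ _ => ?_
    rw [key σ]
    congr 1
    refine Finset.prod_congr rfl fun i _ => ?_
    rw [hMdef]
    simp [mul_comm]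
  have hMdet : M.det ≠ 0 := by
    have hrw : M = Matrix.of (fun i j : Fin k =>
        c j * ((Matrix.of fun i j : Fin k =>
          Polynomial.eval ((ν j : ℕ) : ℂ) (descPochhammer ℂ (i : ℕ))) i j)) := by
      rw [hMdef]
      ext i j
      simp [descPochhammer_eval_eq_descFactorial]
    rw [hrw, Matrix.det_mul_row]
    apply mul_ne_zero
    · rw [Finset.prod_ne_zero_iff]
      exact fun j _ => (horder j).1
    · have htr : (Matrix.of fun i j : Fin k =>
          Polynomial.eval ((ν j : ℕ) : ℂ) (descPochhammer ℂ (i : ℕ))).det =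
          (Matrix.of fun i j : Fin k =>
            Polynomial.eval ((ν i : ℕ) : ℂ) (descPochhammer ℂ (j : ℕ))).det := by
        rw [← Matrix.det_transpose]
        rfl
      rw [htr, ← Matrix.det_eval_matrixOfPolynomials_eq_det_vandermonde
        (fun j => ((ν j : ℕ) : ℂ)) (fun i => descPochhammer ℂ (i : ℕ))
        (fun i => descPochhammer_natDegree ℂ (i : ℕ))
        (fun i => monic_descPochhammer ℂ (i : ℕ))]
      rw [Matrix.det_vandermonde_ne_zero_iff]
      exact fun a b hab => hνmono.injective (Nat.cast_injective hab)
  have hWne : coeff N (psWronskian h) ≠ 0 := by rw [hcoeffN]; exact hMdet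
  have hordW : (psWronskian h).order = (N : ℕ∞) :=
    PowerSeries.order_eq_nat.mpr ⟨hWne, fun m hm => hlow m hm⟩
  constructor
  · intro h0
    apply hWne
    rw [h0, map_zero]
  · rw [hordW]
    have : ∑ i, (h i).order = ((∑ i, ν i : ℕ) : ℕ∞) := by
      rw [Nat.cast_sum]
      exact Finset.sum_congr rfl fun i _ => hν i
    rw [this, ← hN, ← hS]
    push_cast
    ring
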